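/- Let X be a locally compact Hausdorff space with a continuous proper G-action, let π : C₀(X) → B(H) be a nondegenerate covariant representation on the G-Hilbert space H, and let T ∈ B(H) be such that u_h T u_h⁻¹ − T is a compact operator for every h ∈ G. Then for every φ ∈ C₀(X) and every h ∈ G, the map g ↦ π(φ)(u_{gh} T u_{gh}⁻¹ − u_g T u_g⁻¹) belongs to C₀(G, K(H)). -/

import Mathlib

open scoped ZeroAtInfty
open Filter MeasureTheory Topology

noncomputable section

variable {G : Type*} [Group G] [TopologicalSpace G] [IsTopologicalGroup G]
  [LocallyCompactSpace G] [SecondCountableTopology G] [T2Space G]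
variable {X : Type*} [TopologicalSpace X] [LocallyCompactSpace X] [T2Space X]
variable [MulAction G X] [ContinuousSMul G X]
variable {H : Type*} [NormedAddCommGroup H] [InnerProductSpace ℂ H] [CompleteSpace H]
  [SecondCountableTopology H]

/-- The translation action of `G` on `C₀(X, ℂ)`: `(g • φ)(x) = φ(g⁻¹ • x)`. -/
def C0smul (g : G) (φ : C₀(X, ℂ)) : C₀(X, ℂ) where
  toFun := fun x => φ (g⁻¹ • x)
  continuous_toFun := φ.continuous.comp (continuous_const_smul g⁻¹)
  zero_at_infty' := φ.zero_at_infty'.comp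
    ((Homeomorph.smul (g⁻¹ : G)).toCocompactMap.cocompact_tendsto')

/-- Conjugation `g(T) = u_g T u_g⁻¹` by the unitary representation `u`. -/
def conjU (u : G →* unitary (H →L[ℂ] H)) (g : G) (T : H →L[ℂ] H) : H →L[ℂ] H :=
  (u g : H →L[ℂ] H) * T * ((u g⁻¹ : unitary (H →L[ℂ] H)) : H →L[ℂ] H)

/-- Membership in `C₀(G, K(H))`: norm-continuous, compact-operator valued, and
norm vanishing along the cocompact filter on `G`. -/
def InC0GK (f : G → (H →L[ℂ] H)) : Prop :=
  Continuous f ∧ (∀ g, IsCompactOperator (⇑(f g))) ∧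
    Tendsto (fun g => ‖f g‖) (cocompact G) (𝓝 0)

/-- If `S i → 0` strongly along `l`, with uniformly bounded norms, and `C` is a
compact operator, then `S i ∘ C → 0` in operator norm. -/
lemma key_lemma {ι : Type*} (l : Filter ι) (S : ι → H →L[ℂ] H) (M : ℝ)
    (hb : ∀ i, ‖S i‖ ≤ M)
    (hs : ∀ v : H, Tendsto (fun i => S i v) l (𝓝 0))
    (C : H →L[ℂ] H) (hC : IsCompactOperator ⇑C) :
    Tendsto (fun i => ‖(S i).comp C‖) l (𝓝 0) := by
  rw [NormedAddCommGroup.tendsto_nhds_zero]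
  intro ε hε
  obtain ⟨K, hKc, hK⟩ := hC.image_ball_subset_compact 1
  set M' : ℝ := max M 0 with hM'
  have hM'0 : 0 ≤ M' := le_max_right _ _
  have hbM' : ∀ i, ‖S i‖ ≤ M' := fun i => le_trans (hb i) (le_max_left _ _)
  set δ : ℝ := ε / (4 * (M' + 1)) with hδdef
  have hδpos : 0 < δ := by positivity
  obtain ⟨t, htf, htcover⟩ := (Metric.totallyBounded_iff.mp hKc.totallyBounded) δ hδpos
  have hev : ∀ᶠ i in l, ∀ v ∈ t, ‖S i v‖ < δ := by
    rw [htf.eventually_all]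
    intro v hv
    have := (hs v) (Metric.ball_mem_nhds (0 : H) hδpos)
    filter_upwards [this] with i hi
    simpa [Metric.mem_ball, dist_eq_norm] using hi
  filter_upwards [hev] with i hi
  rw [Real.norm_eq_abs, abs_of_nonneg (norm_nonneg _)]
  have hball : ∀ x ∈ Metric.ball (0 : H) 1, ‖S i (C x)‖ ≤ ε / 4 := by
    intro x hx
    have hCx : C x ∈ K := hK ⟨x, hx, rfl⟩
    obtain ⟨v, hv, hvd⟩ : ∃ v ∈ t, C x ∈ Metric.ball v δ := by
      simpa using htcover hCx
    have h1 : ‖S i (C x - v)‖ ≤ M' * δ := by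
      calc ‖S i (C x - v)‖ ≤ ‖S i‖ * ‖C x - v‖ := (S i).le_opNorm _
        _ ≤ M' * δ := by
            apply mul_le_mul (hbM' i) _ (norm_nonneg _) hM'0
            have := Metric.mem_ball.mp hvd
            rw [dist_eq_norm] at this
            exact this.le
    have h2 : ‖S i v‖ ≤ δ := (hi v hv).le
    calc ‖S i (C x)‖ = ‖S i (C x - v) + S i v‖ := by rw [← map_add, sub_add_cancel]
      _ ≤ ‖S i (C x - v)‖ + ‖S i v‖ := norm_add_le _ _
      _ ≤ M' * δ + δ := add_le_add h1 h2
      _ = (M' + 1) * δ := by ring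
      _ = ε / 4 := by
          rw [hδdef]; field_simp
  have hop : ‖(S i).comp C‖ ≤ ε / 2 := by
    apply ContinuousLinearMap.opNorm_le_bound _ (by positivity)
    intro x
    rcases eq_or_ne x 0 with rfl | hx0
    · simp
    · have hxn : (0:ℝ) < ‖x‖ := norm_pos_iff.mpr hx0
      set y : H := (2 * ‖x‖)⁻¹ • x with hy
      have hyb : y ∈ Metric.ball (0 : H) 1 := by
        simp only [Metric.mem_ball, dist_zero_right, hy, norm_smul, norm_inv,
          Real.norm_eq_abs]
        rw [abs_of_pos (by positivity)]
        rw [inv_mul_eq_div, div_lt_one (by positivity)]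
        linarith
      have hxy : x = (2 * ‖x‖) • y := by
        rw [hy, smul_smul, mul_inv_cancel₀ (by positivity), one_smul]
      have : ‖S i (C x)‖ = (2 * ‖x‖) * ‖S i (C y)‖ := by
        conv_lhs => rw [hxy]
        rw [C.map_smul_of_tower, (S i).map_smul_of_tower, norm_smul, Real.norm_eq_abs,
          abs_of_pos (by positivity)]
      rw [ContinuousLinearMap.comp_apply, this]
      calc (2 * ‖x‖) * ‖S i (C y)‖ ≤ (2 * ‖x‖) * (ε / 4) := by
            apply mul_le_mul_of_nonneg_left (hball y hyb) (by positivity)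
        _ = ε / 2 * ‖x‖ := by ring
  linarith

/-- The adjoint (star) of a compact operator on a Hilbert space is compact. -/
lemma star_isCompactOperator {A : H →L[ℂ] H} (hA : IsCompactOperator ⇑A) :
    IsCompactOperator ⇑(star A) := by
  suffices h1 : TotallyBounded ((⇑(star A)) '' Metric.ball 0 1) by
    refine ⟨closure ((⇑(star A)) '' Metric.ball 0 1),
      TotallyBounded.isCompact_of_isClosed h1.closure isClosed_closure, ?_⟩
    exact mem_of_superset (Metric.ball_mem_nhds 0 one_pos)
      (fun x hx => subset_closure ⟨x, hx, rfl⟩)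
  rw [Metric.totallyBounded_iff]
  intro ε hε
  have hB : IsCompactOperator (⇑A ∘ ⇑(star A)) := hA.comp_clm (star A)
  set SB : Set H := (⇑A ∘ ⇑(star A)) '' Metric.ball 0 1 with hSB
  have hSBtb : TotallyBounded SB := by
    obtain ⟨K, hKc, hK⟩ : ∃ K, IsCompact K ∧ (⇑A ∘ ⇑(star A)) '' Metric.ball 0 1 ⊆ K := by
      have hB' : IsCompactOperator ⇑((A.comp (star A)).toLinearMap) := by
        simpa [ContinuousLinearMap.coe_comp'] using hB
      have := hB'.image_ball_subset_compact 1
      simpa [ContinuousLinearMap.coe_comp'] using this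
    exact hKc.totallyBounded.subset hK
  set δ : ℝ := ε ^ 2 / 8 with hδdef
  have hδpos : 0 < δ := by positivity
  obtain ⟨t, hts, htf, htcover⟩ := EMetric.totallyBounded_iff'.mp hSBtb
    (ENNReal.ofReal δ) (by simpa using hδpos)
  have hy : ∀ y ∈ t, ∃ v, v ∈ Metric.ball (0:H) 1 ∧ A ((star A) v) = y := by
    intro y hyt
    obtain ⟨v, hv, hv2⟩ := hts hyt
    exact ⟨v, hv, hv2⟩
  choose! v hv1 hv2 using hy
  refine ⟨(fun y => (star A) (v y)) '' t, htf.image _, ?_⟩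
  rintro p ⟨z, hz, rfl⟩
  have hBz : (⇑A ∘ ⇑(star A)) z ∈ SB := ⟨z, hz, rfl⟩
  obtain ⟨y, hyt, hyd⟩ : ∃ y ∈ t, (⇑A ∘ ⇑(star A)) z ∈ Metric.eball y (ENNReal.ofReal δ) := by
    simpa using htcover hBz
  have hdist : dist (A ((star A) z)) y < δ := by
    have := Metric.mem_eball.mp hyd
    rw [edist_dist] at this
    exact (ENNReal.ofReal_lt_ofReal_iff_of_nonneg dist_nonneg).mp this
  refine Set.mem_iUnion₂.mpr ⟨(star A) (v y), ⟨y, hyt, rfl⟩, ?_⟩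
  rw [Metric.mem_ball, dist_eq_norm, ← map_sub]
  set d : H := z - v y with hd
  have hnd : ‖d‖ ≤ 2 := by
    have h1 : ‖z‖ < 1 := by simpa [dist_eq_norm] using hz
    have h2 : ‖v y‖ < 1 := by simpa [dist_eq_norm] using hv1 y hyt
    calc ‖d‖ ≤ ‖z‖ + ‖v y‖ := norm_sub_le _ _
      _ ≤ 2 := by linarith
  have hsq : ‖(star A) d‖ ^ 2 ≤ ‖d‖ * ‖A ((star A) d)‖ := by
    have e1 : RCLike.re (inner ℂ ((star A) d) ((star A) d) : ℂ) = ‖(star A) d‖ ^ 2 :=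
      inner_self_eq_norm_sq _
    have e2 : (inner ℂ ((star A) d) ((star A) d) : ℂ) = inner ℂ d (A ((star A) d)) := by
      rw [ContinuousLinearMap.star_eq_adjoint, ContinuousLinearMap.adjoint_inner_left]
    rw [← e1, e2]
    exact re_inner_le_norm _ _
  have hAAd : ‖A ((star A) d)‖ < δ := by
    have : A ((star A) d) = A ((star A) z) - y := by
      rw [hd, map_sub, map_sub, hv2 y hyt]
    rw [this, ← dist_eq_norm]
    exact hdist
  have hfin : ‖(star A) d‖ ^ 2 < ε ^ 2 / 4 := by
    calc ‖(star A) d‖ ^ 2 ≤ ‖d‖ * ‖A ((star A) d)‖ := hsq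
      _ ≤ 2 * ‖A ((star A) d)‖ := by
          apply mul_le_mul_of_nonneg_right hnd (norm_nonneg _)
      _ < 2 * δ := by linarith [hAAd]
      _ = ε ^ 2 / 4 := by rw [hδdef]; ring
  nlinarith [norm_nonneg ((star A) d)]

lemma C0_apply_le (f : C₀(X, ℂ)) (x : X) : ‖f x‖ ≤ ‖f‖ := by
  have := f.toBCF.norm_coe_le_norm x
  rwa [ZeroAtInftyContinuousMap.norm_toBCF_eq_norm] at this

lemma C0_norm_le {f : C₀(X, ℂ)} {M : ℝ} (hM : 0 ≤ M) (h : ∀ x, ‖f x‖ ≤ M) : ‖f‖ ≤ M := by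
  rw [← ZeroAtInftyContinuousMap.norm_toBCF_eq_norm]
  exact (BoundedContinuousFunction.norm_le hM).mpr h

/-- Properness implies the product `φ · (g • ψ)` tends to zero in sup norm as
`g → ∞` in `G`. -/
lemma C0_decay (hproper : IsProperMap fun p : G × X => (p.1 • p.2, p.2))
    (φ ψ : C₀(X, ℂ)) :
    Tendsto (fun g : G => ‖φ * C0smul g ψ‖) (cocompact G) (𝓝 0) := by
  rw [NormedAddCommGroup.tendsto_nhds_zero]
  intro ε hε
  set ε' : ℝ := ε / (2 * (‖φ‖ + ‖ψ‖ + 1)) with hε'def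
  have hφn : (0:ℝ) ≤ ‖φ‖ := norm_nonneg _
  have hψn : (0:ℝ) ≤ ‖ψ‖ := norm_nonneg _
  have hε'pos : 0 < ε' := by positivity
  obtain ⟨Kφ, hKφc, hKφ⟩ := mem_cocompact.mp (φ.zero_at_infty' (Metric.ball_mem_nhds 0 hε'pos))
  obtain ⟨Kψ, hKψc, hKψ⟩ := mem_cocompact.mp (ψ.zero_at_infty' (Metric.ball_mem_nhds 0 hε'pos))
  have hWc : IsCompact (Prod.fst '' ((fun p : G × X => (p.1 • p.2, p.2)) ⁻¹' (Kφ ×ˢ Kψ))) :=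
    (hproper.isCompact_preimage (hKφc.prod hKψc)).image continuous_fst
  filter_upwards [hWc.compl_mem_cocompact] with g hg
  rw [Real.norm_eq_abs, abs_of_nonneg (norm_nonneg _)]
  have hbound : ∀ x : X, ‖(φ * C0smul g ψ) x‖ ≤ ε' * (‖φ‖ + ‖ψ‖) := by
    intro x
    have hval : (φ * C0smul g ψ) x = φ x * ψ (g⁻¹ • x) := rfl
    rw [hval, norm_mul]
    by_cases hx : x ∈ Kφ
    · have hgx : g⁻¹ • x ∉ Kψ := by
        intro hmem
        apply hg
        refine ⟨(g, g⁻¹ • x), ?_, rfl⟩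
        simp only [Set.mem_preimage, Set.mem_prod, smul_inv_smul]
        exact ⟨hx, hmem⟩
      have h1 : ‖ψ (g⁻¹ • x)‖ ≤ ε' := by
        have := hKψ hgx
        simp only [Set.mem_preimage, Metric.mem_ball, dist_zero_right] at this
        exact this.le
      have h2 : ‖φ x‖ ≤ ‖φ‖ := C0_apply_le φ x
      nlinarith [norm_nonneg (ψ (g⁻¹ • x)), norm_nonneg (φ x)]
    · have h1 : ‖φ x‖ ≤ ε' := by
        have := hKφ hx
        simp only [Set.mem_preimage, Metric.mem_ball, dist_zero_right] at this
        exact this.le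
      have h2 : ‖ψ (g⁻¹ • x)‖ ≤ ‖ψ‖ := C0_apply_le ψ _
      nlinarith [norm_nonneg (ψ (g⁻¹ • x)), norm_nonneg (φ x)]
  have : ‖φ * C0smul g ψ‖ ≤ ε' * (‖φ‖ + ‖ψ‖) := C0_norm_le (by positivity) hbound
  have hlt : ε' * (‖φ‖ + ‖ψ‖) < ε := by
    rw [hε'def]
    rw [div_mul_eq_mul_div, div_lt_iff₀ (by positivity)]
    nlinarith
  linarith

/-- Uniformly bounded operators converging strongly to `0` on a spanning-dense
set converge strongly to `0` everywhere. -/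
lemma strong_to_zero {ι : Type*} (l : Filter ι) (S : ι → H →L[ℂ] H) (M : ℝ)
    (hb : ∀ i, ‖S i‖ ≤ M) (s : Set H)
    (hd : Dense (Submodule.span ℂ s : Set H))
    (hs : ∀ v ∈ s, Tendsto (fun i => S i v) l (𝓝 0)) (v : H) :
    Tendsto (fun i => S i v) l (𝓝 0) := by
  set M' : ℝ := max M 0 with hM'
  have hM'0 : 0 ≤ M' := le_max_right _ _
  have hbM' : ∀ i, ‖S i‖ ≤ M' := fun i => le_trans (hb i) (le_max_left _ _)
  have hspan : ∀ w ∈ Submodule.span ℂ s, Tendsto (fun i => S i w) l (𝓝 0) := by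
    intro w hw
    induction hw using Submodule.span_induction with
    | mem x hx => exact hs x hx
    | zero => simpa using (tendsto_const_nhds : Tendsto (fun _ : ι => (0:H)) l _)
    | add x y _ _ hx' hy' => simpa using hx'.add hy'
    | smul c x _ hx' => simpa using hx'.const_smul c
  rw [NormedAddCommGroup.tendsto_nhds_zero]
  intro ε hε
  have hv : v ∈ closure (Submodule.span ℂ s : Set H) := by rw [hd.closure_eq]; trivial
  obtain ⟨w, hw, hwd⟩ := Metric.mem_closure_iff.mp hv (ε / (2 * (M' + 1))) (by positivity)
  have hw0 := hspan w hw
  rw [NormedAddCommGroup.tendsto_nhds_zero] at hw0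
  filter_upwards [hw0 (ε/2) (by positivity)] with i hi
  have h1 : ‖S i v‖ ≤ ‖S i (v - w)‖ + ‖S i w‖ := by
    calc ‖S i v‖ = ‖S i (v - w) + S i w‖ := by rw [← map_add, sub_add_cancel]
      _ ≤ _ := norm_add_le _ _
  have h2 : ‖S i (v - w)‖ ≤ M' * (ε / (2 * (M' + 1))) := by
    calc ‖S i (v - w)‖ ≤ ‖S i‖ * ‖v - w‖ := (S i).le_opNorm _
      _ ≤ M' * (ε / (2 * (M' + 1))) := by
          apply mul_le_mul (hbM' i) _ (norm_nonneg _) hM'0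
          rw [← dist_eq_norm]
          exact hwd.le
  have h3 : M' * (ε / (2 * (M' + 1))) < ε / 2 := by
    rw [mul_div_assoc']
    rw [div_lt_div_iff₀ (by positivity) (by positivity)]
    nlinarith
  have h4 : ‖S i w‖ < ε / 2 := by simpa using hi
  linarith

/-- Abbreviation for the coercion of `u g` to a continuous linear map. -/
def Uc (u : G →* unitary (H →L[ℂ] H)) (g : G) : H →L[ℂ] H :=
  ((u g : unitary (H →L[ℂ] H)) : H →L[ℂ] H)

lemma Uc_def (u : G →* unitary (H →L[ℂ] H)) (g : G) :
    Uc u g = ((u g : unitary (H →L[ℂ] H)) : H →L[ℂ] H) := rfl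

lemma Uc_inv_mul (u : G →* unitary (H →L[ℂ] H)) (g : G) :
    Uc u g⁻¹ * Uc u g = 1 := by
  rw [Uc_def, Uc_def, ← MulMemClass.coe_mul, ← map_mul, inv_mul_cancel, map_one,
    OneMemClass.coe_one]

lemma norm_Uc_le (u : G →* unitary (H →L[ℂ] H)) (g : G) : ‖Uc u g‖ ≤ 1 := by
  have h1 : star (Uc u g) * Uc u g = 1 := Unitary.coe_star_mul_self (u g)
  have h2 : ‖Uc u g‖ * ‖Uc u g‖ = ‖star (Uc u g) * Uc u g‖ :=
    (CStarRing.norm_star_mul_self).symm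
  rw [h1] at h2
  have h3 : ‖(1 : H →L[ℂ] H)‖ ≤ 1 := by
    rw [ContinuousLinearMap.one_def]; exact ContinuousLinearMap.norm_id_le
  nlinarith [norm_nonneg (Uc u g)]

lemma star_Uc_inv (u : G →* unitary (H →L[ℂ] H)) (g : G) :
    star (Uc u g⁻¹) = Uc u g := by
  rw [Uc_def, Uc_def, ← Unitary.coe_star, Unitary.star_eq_inv, ← map_inv, inv_inv]

lemma conj_diff (u : G →* unitary (H →L[ℂ] H)) (P T : H →L[ℂ] H) (g h : G) :
    P * (conjU u (g * h) T - conjU u g T)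
      = ((P * Uc u g) * (conjU u h T - T)) * Uc u g⁻¹ := by
  simp only [conjU, Uc_def, mul_inv_rev, map_mul, MulMemClass.coe_mul, mul_sub, sub_mul,
    mul_assoc]

lemma split_alg {R : Type*} [Ring R] (P a a₀ K bi b₀i : R) :
    ((P * a) * K) * bi - ((P * a₀) * K) * b₀i
      = (((P * a) - (P * a₀)) * K) * bi + ((P * a₀) * K) * (bi - b₀i) := by
  noncomm_ring

theorem statement_8
    (u : G →* unitary (H →L[ℂ] H))
    (hu : ∀ v : H, Continuous fun g : G => (u g : H →L[ℂ] H) v)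
    (π : C₀(X, ℂ) →⋆ₙₐ[ℂ] (H →L[ℂ] H))
    (hπnd : Dense (Submodule.span ℂ (Set.range fun p : C₀(X, ℂ) × H => π p.1 p.2) : Set H))
    (hcov : ∀ (g : G) (φ : C₀(X, ℂ)),
      (u g : H →L[ℂ] H) * π φ * ((u g⁻¹ : unitary (H →L[ℂ] H)) : H →L[ℂ] H) = π (C0smul g φ))
    (hproper : IsProperMap fun p : G × X => (p.1 • p.2, p.2))
    (T : H →L[ℂ] H) (hT : ∀ h : G, IsCompactOperator (⇑(conjU u h T - T)))
    (φ : C₀(X, ℂ)) (h : G) :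
    InC0GK (fun g : G => π φ * (conjU u (g * h) T - conjU u g T)) := by
  classical
  set K : H →L[ℂ] H := conjU u h T - T with hKdef
  have hK : IsCompactOperator ⇑K := hT h
  have hid : ∀ g : G, (π φ) * (conjU u (g * h) T - conjU u g T)
      = (((π φ) * Uc u g) * K) * Uc u g⁻¹ :=
    fun g => conj_diff u (π φ) T g h
  have hUcont : ∀ v : H, Continuous fun g : G => Uc u g v := hu
  have hPAle : ∀ g : G, ‖(π φ) * Uc u g‖ ≤ ‖π φ‖ := by
    intro g
    calc ‖(π φ) * Uc u g‖ ≤ ‖π φ‖ * ‖Uc u g‖ := norm_mul_le _ _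
      _ ≤ ‖π φ‖ := mul_le_of_le_one_right (norm_nonneg _) (norm_Uc_le u g)
  -- strong vanishing of `g ↦ π φ ∘ u g` along the cocompact filter
  have hSv : ∀ v : H, Tendsto (fun g : G => ((π φ) * Uc u g) v) (cocompact G) (𝓝 0) := by
    intro v
    refine strong_to_zero (cocompact G) _ ‖π φ‖ hPAle _ hπnd ?_ v
    rintro w ⟨⟨ψ, w'⟩, rfl⟩
    have hmulid : ∀ g : G, Uc u g * (π ψ) = π (C0smul g ψ) * Uc u g := by
      intro g
      have h2 := hcov g ψ
      have h3 : Uc u g * π ψ * Uc u g⁻¹ * Uc u g = π (C0smul g ψ) * Uc u g := by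
        rw [Uc_def, Uc_def, h2]
      rwa [mul_assoc (_ * π ψ), Uc_inv_mul u g, mul_one] at h3
    have heq : ∀ g : G,
        ((π φ) * Uc u g) (π ψ w') = (π (φ * C0smul g ψ)) (Uc u g w') := by
      intro g
      have hmm : (π φ) * (Uc u g * (π ψ)) = π (φ * C0smul g ψ) * Uc u g := by
        rw [hmulid g, ← mul_assoc, ← map_mul]
      calc ((π φ) * Uc u g) ((π ψ) w')
          = ((π φ) * (Uc u g * (π ψ))) w' := by
            simp [ContinuousLinearMap.mul_apply]
        _ = (π (φ * C0smul g ψ) * Uc u g) w' := by rw [hmm]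
        _ = _ := by simp [ContinuousLinearMap.mul_apply]
    simp only [heq]
    apply squeeze_zero_norm (a := fun g : G => ‖φ * C0smul g ψ‖ * ‖w'‖)
    · intro g
      calc ‖(π (φ * C0smul g ψ)) (Uc u g w')‖
          ≤ ‖π (φ * C0smul g ψ)‖ * ‖Uc u g w'‖ := (π (φ * C0smul g ψ)).le_opNorm _
        _ ≤ ‖φ * C0smul g ψ‖ * ‖w'‖ := by
            apply mul_le_mul (NonUnitalStarAlgHom.norm_apply_le π _) _
              (norm_nonneg _) (norm_nonneg _)
            calc ‖Uc u g w'‖ ≤ ‖Uc u g‖ * ‖w'‖ := ContinuousLinearMap.le_opNorm _ _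
              _ ≤ 1 * ‖w'‖ := mul_le_mul_of_nonneg_right (norm_Uc_le u g) (norm_nonneg _)
              _ = ‖w'‖ := one_mul _
    · simpa using (C0_decay hproper φ ψ).mul_const ‖w'‖
  refine ⟨?_, ?_, ?_⟩
  · -- continuity
    rw [continuous_iff_continuousAt]
    intro g₀
    have h1 : Tendsto (fun g : G =>
        ‖(((π φ) * Uc u g) - ((π φ) * Uc u g₀)).comp K‖) (𝓝 g₀) (𝓝 0) := by
      apply key_lemma _ _ (2 * ‖π φ‖) (fun g => ?_) (fun v => ?_) K hK
      · calc ‖((π φ) * Uc u g) - ((π φ) * Uc u g₀)‖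
            ≤ ‖(π φ) * Uc u g‖ + ‖(π φ) * Uc u g₀‖ := norm_sub_le _ _
          _ ≤ ‖π φ‖ + ‖π φ‖ := add_le_add (hPAle g) (hPAle g₀)
          _ = 2 * ‖π φ‖ := by ring
      · have hc : Continuous fun g : G => ((π φ) * Uc u g) v := by
          simp only [ContinuousLinearMap.mul_apply]
          exact (π φ).continuous.comp (hUcont v)
        have := (hc.tendsto g₀).sub
          (tendsto_const_nhds : Tendsto (fun _ : G => ((π φ) * Uc u g₀) v) (𝓝 g₀) _)
        simpa [ContinuousLinearMap.sub_apply] using this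
    have hBcompact : IsCompactOperator ⇑(star (((π φ) * Uc u g₀) * K)) := by
      apply star_isCompactOperator
      exact hK.clm_comp ((π φ) * Uc u g₀)
    have h2 : Tendsto (fun g : G =>
        ‖(Uc u g - Uc u g₀).comp (star (((π φ) * Uc u g₀) * K))‖) (𝓝 g₀) (𝓝 0) := by
      apply key_lemma _ _ 2 (fun g => ?_) (fun v => ?_) _ hBcompact
      · calc ‖Uc u g - Uc u g₀‖ ≤ ‖Uc u g‖ + ‖Uc u g₀‖ := norm_sub_le _ _
          _ ≤ 1 + 1 := add_le_add (norm_Uc_le u g) (norm_Uc_le u g₀)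
          _ = 2 := by norm_num
      · have := ((hUcont v).tendsto g₀).sub
          (tendsto_const_nhds : Tendsto (fun _ : G => Uc u g₀ v) (𝓝 g₀) _)
        simpa [ContinuousLinearMap.sub_apply] using this
    rw [ContinuousAt, tendsto_iff_norm_sub_tendsto_zero]
    apply squeeze_zero (g := fun g : G => ‖(((π φ) * Uc u g) - ((π φ) * Uc u g₀)).comp K‖
        + ‖(Uc u g - Uc u g₀).comp (star (((π φ) * Uc u g₀) * K))‖)
      (fun g => norm_nonneg _) _ (by simpa using h1.add h2)
    intro g
    rw [hid g, hid g₀, split_alg]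
    have hb1 : ‖((((π φ) * Uc u g) - ((π φ) * Uc u g₀)) * K) * Uc u g⁻¹‖
        ≤ ‖(((π φ) * Uc u g) - ((π φ) * Uc u g₀)) * K‖ := by
      calc ‖_ * Uc u g⁻¹‖
          ≤ ‖(((π φ) * Uc u g) - ((π φ) * Uc u g₀)) * K‖ * ‖Uc u g⁻¹‖ := norm_mul_le _ _
        _ ≤ _ := mul_le_of_le_one_right (norm_nonneg _) (norm_Uc_le u g⁻¹)
    have hb2 : ‖(((π φ) * Uc u g₀) * K) * (Uc u g⁻¹ - Uc u g₀⁻¹)‖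
        = ‖(Uc u g - Uc u g₀) * star (((π φ) * Uc u g₀) * K)‖ := by
      rw [← norm_star ((((π φ) * Uc u g₀) * K) * (Uc u g⁻¹ - Uc u g₀⁻¹)), star_mul, star_sub,
        star_Uc_inv u g, star_Uc_inv u g₀]
    calc ‖_ + _‖
        ≤ ‖((((π φ) * Uc u g) - ((π φ) * Uc u g₀)) * K) * Uc u g⁻¹‖
          + ‖(((π φ) * Uc u g₀) * K) * (Uc u g⁻¹ - Uc u g₀⁻¹)‖ := norm_add_le _ _
      _ ≤ ‖(((π φ) * Uc u g) - ((π φ) * Uc u g₀)).comp K‖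
          + ‖(Uc u g - Uc u g₀).comp (star (((π φ) * Uc u g₀) * K))‖ := by
          rw [hb2]
          exact add_le_add hb1 (le_of_eq rfl)
  · -- compactness
    intro g
    have hc := (hK.clm_comp ((π φ) * Uc u g)).comp_clm (Uc u g⁻¹)
    show IsCompactOperator ⇑(π φ * (conjU u (g * h) T - conjU u g T))
    rw [hid g]
    exact hc
  · -- vanishing at infinity
    have hkey := key_lemma (cocompact G) (fun g => (π φ) * Uc u g) ‖π φ‖ hPAle hSv K hK
    apply squeeze_zero (g := fun g : G => ‖(((π φ) * Uc u g)).comp K‖)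
      (fun g => norm_nonneg _) _ hkey
    intro g
    rw [hid g]
    calc ‖(((π φ) * Uc u g) * K) * Uc u g⁻¹‖
        ≤ ‖((π φ) * Uc u g) * K‖ * ‖Uc u g⁻¹‖ := norm_mul_le _ _
      _ ≤ ‖(((π φ) * Uc u g)).comp K‖ :=
          mul_le_of_le_one_right (norm_nonneg _) (norm_Uc_le u g⁻¹)

end
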